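/- For every integer r, define the r-shifted q-rational {x - r} by the recursion {x - r} = q^{-2}({x - r + 1} - 1) (equivalently {y+1} = q²{y}+1), starting from given X = {x}. Let δ := {x} - {x-1} be nonzero and ν satisfy ν² = δ^{-1}. Then substituting a = q·ν·δ into (a·q^{-r} - a^{-1}·q^{r})/(q - q^{-1}) yields q^{r}·ν·{x - r}. -/

import Mathlib

/-- Lemma 4.6 (lem:formulaqbin): with `f : ℤ → K` the shifted q-rationals
(`f 0 = {x}`, `f (y+1) = q² f y + 1`), `δ := f 0 - f (-1) ≠ 0`, `ν² = δ⁻¹`,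
substituting `a = qνδ` into `(a q^{-r} - a⁻¹ q^r)/(q - q⁻¹)` yields
`q^r · ν · f (-r)` for all `r : ℤ`. -/
theorem formula_qbin {K : Type*} [Field K] (q ν : K) (f : ℤ → K)
    (hq : q ≠ 0) (hqq : q - q⁻¹ ≠ 0)
    (hrec : ∀ y : ℤ, f (y + 1) = q ^ 2 * f y + 1)
    (hδ : f 0 - f (-1) ≠ 0) (hν : ν ^ 2 = (f 0 - f (-1))⁻¹) :
    ∀ r : ℤ,
      let a := q * ν * (f 0 - f (-1))
      (a * q ^ (-r) - a⁻¹ * q ^ r) / (q - q⁻¹) = q ^ r * ν * f (-r) := by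
  set δ := f 0 - f (-1) with hδdef
  have h1 := hrec (-1)
  norm_num at h1
  have keyp : ∀ n : ℕ, f (-(n:ℤ)) * (q^2 - 1) * q^(2*n) = q^2 * δ - q^(2*n) := by
    intro n
    induction n with
    | zero => simpa using by linear_combination -h1
    | succ n ih =>
      have h := hrec (-(n+1))
      rw [show -((n:ℤ)+1) + 1 = -n by ring] at h
      push_cast
      rw [show -((n:ℤ)+1) = -(((n:ℕ):ℤ)+1) by push_cast; ring]
      linear_combination ih - (q^2-1)*q^(2*n)*h
  have keyn : ∀ n : ℕ, f ((n:ℤ)) * (q^2 - 1) = q^2 * δ * q^(2*n) - 1 := by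
    intro n
    induction n with
    | zero => simpa using by linear_combination -h1
    | succ n ih =>
      have h := hrec n
      push_cast
      linear_combination q^2 * ih + (q^2-1)*h
  have hν0 : ν ≠ 0 := by
    intro h
    rw [h, zero_pow (by norm_num), eq_comm, inv_eq_zero] at hν
    exact hδ hν
  have hνδ : ν^2 * δ = 1 := by rw [hν]; exact inv_mul_cancel₀ hδ
  have hainv : (q * ν * δ)⁻¹ = q⁻¹ * ν := by
    apply inv_eq_of_mul_eq_one_right
    field_simp
    linear_combination hνδ
  intro r a
  rw [show a = q * ν * δ from rfl, hainv, div_eq_iff hqq]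
  obtain ⟨n, rfl | rfl⟩ := Int.eq_nat_or_neg r
  · rw [zpow_neg, zpow_natCast]
    have hqn : (q:K)^n ≠ 0 := pow_ne_zero _ hq
    field_simp
    linear_combination (-1) * keyp n
    
  · rw [neg_neg, zpow_neg, zpow_natCast]
    have hqn : (q:K)^n ≠ 0 := pow_ne_zero _ hq
    field_simp
    linear_combination (-1) * keyn n
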